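/- For every pair of permutations π₁, π₂ ∈ S_m, there exist a 213-avoiding permutation ρ₁ ∈ S_m, a 132-avoiding permutation ρ₂ ∈ S_m, and permutations α, β ∈ S_m such that α∘ρ₁∘β = π₁ and α⁻¹∘ρ₂∘β⁻¹ = π₂. -/

import Mathlib

/-- `σ` contains the pattern 213. -/
def Contains213 {m : ℕ} (σ : Equiv.Perm (Fin m)) : Prop :=
  ∃ i₁ i₂ i₃ : Fin m, i₁ < i₂ ∧ i₂ < i₃ ∧ σ i₂ < σ i₁ ∧ σ i₁ < σ i₃

/-- `σ` contains the pattern 132. -/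
def Contains132 {m : ℕ} (σ : Equiv.Perm (Fin m)) : Prop :=
  ∃ i₁ i₂ i₃ : Fin m, i₁ < i₂ ∧ i₂ < i₃ ∧ σ i₁ < σ i₃ ∧ σ i₃ < σ i₂

/-- Every pair of points lies on the same cycle. -/
def IsFull {n : ℕ} (f : Equiv.Perm (Fin n)) : Prop := ∀ x y : Fin n, f.SameCycle x y

lemma sc_step {n : ℕ} (f : Equiv.Perm (Fin n)) (x : Fin n) : f.SameCycle x (f x) :=
  ⟨1, by simp⟩

lemma sc_step' {n : ℕ} (f : Equiv.Perm (Fin n)) (x y : Fin n) (h : f x = y) :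
    f.SameCycle x y := ⟨1, by simpa using h⟩

lemma isFull_conj {n : ℕ} {f : Equiv.Perm (Fin n)} (g : Equiv.Perm (Fin n)) (hf : IsFull f) :
    IsFull (g * f * g⁻¹) := by
  intro x y
  obtain ⟨k, hk⟩ := hf (g⁻¹ x) (g⁻¹ y)
  refine ⟨k, ?_⟩
  rw [conj_zpow]
  simp only [Equiv.Perm.mul_apply]
  rw [hk]
  simp

lemma isFull_inv {n : ℕ} {f : Equiv.Perm (Fin n)} (hf : IsFull f) : IsFull f⁻¹ := by
  intro x y
  exact (Equiv.Perm.sameCycle_inv).2 (hf x y)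

lemma not213_one {m : ℕ} : ¬ Contains213 (1 : Equiv.Perm (Fin m)) := by
  rintro ⟨i₁, i₂, i₃, h12, h23, hv1, hv2⟩
  simp only [Equiv.Perm.one_apply] at hv1
  exact absurd h12 (not_lt.2 hv1.le)

lemma not132_one {m : ℕ} : ¬ Contains132 (1 : Equiv.Perm (Fin m)) := by
  rintro ⟨i₁, i₂, i₃, h12, h23, hv1, hv2⟩
  simp only [Equiv.Perm.one_apply] at hv2
  exact absurd h23 (not_lt.2 hv2.le)

lemma rev_avoid {m : ℕ} {ρ : Equiv.Perm (Fin m)} (h : ¬ Contains213 ρ) :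
    ¬ Contains132 (Fin.revPerm * ρ * Fin.revPerm) := by
  rintro ⟨i₁, i₂, i₃, h12, h23, hv1, hv2⟩
  simp only [Equiv.Perm.mul_apply, Fin.revPerm_apply] at hv1 hv2
  exact h ⟨i₃.rev, i₂.rev, i₁.rev, Fin.rev_lt_rev.2 h23, Fin.rev_lt_rev.2 h12,
    Fin.rev_lt_rev.1 hv2, Fin.rev_lt_rev.1 hv1⟩

lemma isFull_isCycle {m : ℕ} (hm : 2 ≤ m) {c : Equiv.Perm (Fin m)} (hc : IsFull c) :
    c.IsCycle ∧ c.support.card = m := by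
  have hmove : ∀ x : Fin m, c x ≠ x := by
    intro x hx
    have hy : ∃ y : Fin m, y ≠ x := by
      rcases Fin.ext_iff.not.1 (show (⟨0, by omega⟩ : Fin m) ≠ ⟨1, by omega⟩ by
        simp [Fin.ext_iff]) with _
      by_cases h0 : x = ⟨0, by omega⟩
      · exact ⟨⟨1, by omega⟩, by simp [h0, Fin.ext_iff]⟩
      · exact ⟨⟨0, by omega⟩, fun hh => h0 hh.symm⟩
    obtain ⟨y, hy⟩ := hy
    obtain ⟨k, hk⟩ := hc x y
    rw [Equiv.Perm.zpow_apply_eq_self_of_apply_eq_self hx k] at hk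
    exact hy hk.symm
  constructor
  · exact ⟨⟨0, by omega⟩, hmove _, fun y _ => hc _ y⟩
  · have : c.support = Finset.univ := Finset.eq_univ_iff_forall.2 fun x =>
      Equiv.Perm.mem_support.2 (hmove x)
    rw [this, Finset.card_univ, Fintype.card_fin]

set_option maxHeartbeats 1000000 in
lemma key : ∀ (n : ℕ) (h : Equiv.Perm (Fin n)),
    ∃ ρ : Equiv.Perm (Fin n), ¬ Contains213 ρ ∧ IsFull (h * ρ) := by
  intro n
  induction n using Nat.strong_induction_on with
  | _ n IH =>
  intro h
  rcases Nat.eq_zero_or_pos n with hn | hn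
  · subst hn
    exact ⟨1, by rintro ⟨⟨i, hi⟩, -⟩; omega, fun x => x.elim0⟩
  classical
  obtain ⟨G, hGdef⟩ : ∃ G : ℕ → ℕ, G = fun k => if hk : k < n then (h ⟨k, hk⟩).val else 0 :=
    ⟨_, rfl⟩
  have hGh : ∀ y : Fin n, (h y).val = G y.val := by
    intro y
    simp only [hGdef]
    rw [dif_pos y.isLt, Fin.eta]
  have hGlt : ∀ k, k < n → G k < n := by
    intro k hk
    simp only [hGdef]
    rw [dif_pos hk]
    exact (h _).isLt
  have hGinj : ∀ k l, k < n → l < n → G k = G l → k = l := by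
    intro k l hk hl he
    simp only [hGdef] at he
    rw [dif_pos hk, dif_pos hl] at he
    exact congrArg Fin.val (h.injective (Fin.ext he : h ⟨k, hk⟩ = h ⟨l, hl⟩))
  by_cases H : ∃ j, j < n - 1 ∧ G (n - 1 - j) ≠ j
  · -- main case
    have hspec := Nat.find_spec H
    set j₀ := Nat.find H with hj₀def
    obtain ⟨hj₀lt, hj₀ne⟩ := hspec
    have chain : ∀ j, j < j₀ → G (n - 1 - j) = j := by
      intro j hj
      have hmin := Nat.find_min H hj
      push_neg at hmin
      exact hmin (by omega)
    set qv := G (n - 1 - j₀) with hqv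
    have hqlt : qv < n := hGlt _ (by omega)
    have hq_ge : j₀ + 1 ≤ qv := by
      rcases Nat.lt_or_ge qv (j₀ + 1) with hlt | hge
      · exfalso
        rcases Nat.lt_succ_iff_lt_or_eq.1 hlt with h' | h'
        · have hc : G (n - 1 - qv) = G (n - 1 - j₀) := (chain qv h').trans hqv
          have := hGinj (n - 1 - qv) (n - 1 - j₀) (by omega) (by omega) hc
          omega
        · exact hj₀ne h'
      · exact hge
    have C1 : ∀ k, k < n - (j₀ + 1) → j₀ ≤ G k ∧ G k ≠ qv := by
      intro k hk
      constructor
      · by_contra hlt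
        push_neg at hlt
        have hc := chain (G k) hlt
        have := hGinj (n - 1 - G k) k (by omega) (by omega) hc
        omega
      · intro he
        have hc : G k = G (n - 1 - j₀) := he.trans hqv
        have := hGinj k (n - 1 - j₀) (by omega) (by omega) hc
        omega
    -- the contracted permutation on Fin (n - (j₀ + 1))
    obtain ⟨f', hf'def⟩ : ∃ F : Fin (n - (j₀ + 1)) → Fin (n - (j₀ + 1)), F = fun u =>
        if G u.val = j₀ then ⟨qv - (j₀ + 1), by omega⟩
        else ⟨G u.val - (j₀ + 1), by
          have h1 := hGlt u.val (by have := u.isLt; omega)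
          have h2 := u.isLt
          omega⟩ := ⟨_, rfl⟩
    have hf'val : ∀ u, (f' u).val =
        if G u.val = j₀ then qv - (j₀ + 1) else G u.val - (j₀ + 1) := by
      intro u
      simp only [hf'def]
      split_ifs <;> rfl
    have hinj' : Function.Injective f' := by
      intro u₁ u₂ he
      have hv : (f' u₁).val = (f' u₂).val := congrArg Fin.val he
      rw [hf'val, hf'val] at hv
      have b1 := u₁.isLt
      have b2 := u₂.isLt
      have c1 := C1 u₁.val u₁.isLt
      have c2 := C1 u₂.val u₂.isLt
      obtain ⟨c1a, c1b⟩ := c1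
      obtain ⟨c2a, c2b⟩ := c2
      have g1 := hGlt u₁.val (by omega)
      have g2 := hGlt u₂.val (by omega)
      apply Fin.ext
      split_ifs at hv with h1 h2 h2
      · exact hGinj _ _ (by omega) (by omega) (h1.trans h2.symm)
      · exfalso; exact c2b (by omega)
      · exfalso; exact c1b (by omega)
      · exact hGinj _ _ (by omega) (by omega) (by omega)
    have hbij : Function.Bijective f' := Finite.injective_iff_bijective.mp hinj'
    have happ : ∀ u, (Equiv.ofBijective f' hbij) u = f' u := fun u => rfl
    obtain ⟨h', hh'app⟩ : ∃ h' : Equiv.Perm (Fin (n - (j₀ + 1))), ∀ u, h' u = f' u :=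
      ⟨Equiv.ofBijective f' hbij, happ⟩
    obtain ⟨ρ', hρ'av, hρ'full⟩ := IH (n - (j₀ + 1)) (by omega) h'
    obtain ⟨R, hRdef⟩ : ∃ R : ℕ → ℕ,
        R = fun k => if hk : k < n - (j₀ + 1) then (ρ' ⟨k, hk⟩).val else 0 := ⟨_, rfl⟩
    have hRρ : ∀ u : Fin (n - (j₀ + 1)), R u.val = (ρ' u).val := by
      intro u
      simp only [hRdef]
      rw [dif_pos u.isLt, Fin.eta]
    have hRlt : ∀ k, k < n - (j₀ + 1) → R k < n - (j₀ + 1) := by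
      intro k hk
      simp only [hRdef]
      rw [dif_pos hk]
      exact (ρ' _).isLt
    have hRinj : ∀ k l, k < n - (j₀ + 1) → l < n - (j₀ + 1) → R k = R l → k = l := by
      intro k l hk hl he
      simp only [hRdef] at he
      rw [dif_pos hk, dif_pos hl] at he
      exact congrArg Fin.val (ρ'.injective (Fin.ext he : ρ' ⟨k, hk⟩ = ρ' ⟨l, hl⟩))
    -- the new permutation ρ
    obtain ⟨f, hfdef⟩ : ∃ F : Fin n → Fin n, F = fun x =>
        if x.val = 0 then ⟨n - (j₀ + 1), by omega⟩
        else if x.val < j₀ + 1 then ⟨n - 1 - (x.val - 1), by omega⟩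
        else ⟨R (x.val - (j₀ + 1)), by
          have h1 := hRlt (x.val - (j₀ + 1)) (by have := x.isLt; omega)
          omega⟩ := ⟨_, rfl⟩
    have hfval : ∀ x : Fin n, (f x).val =
        if x.val = 0 then n - (j₀ + 1)
        else if x.val < j₀ + 1 then n - 1 - (x.val - 1)
        else R (x.val - (j₀ + 1)) := by
      intro x
      simp only [hfdef]
      split_ifs <;> rfl
    have hfinj : Function.Injective f := by
      intro a b hab
      have hv : (f a).val = (f b).val := congrArg Fin.val hab
      rw [hfval a, hfval b] at hv
      have b1 := a.isLt
      have b2 := b.isLt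
      have r1 := hRlt (a.val - (j₀ + 1)) (by omega)
      have r2 := hRlt (b.val - (j₀ + 1)) (by omega)
      apply Fin.ext
      split_ifs at hv <;> try omega
      have := hRinj _ _ (by omega) (by omega) hv
      omega
    have hbij2 : Function.Bijective f := Finite.injective_iff_bijective.mp hfinj
    have happ2 : ∀ x, (Equiv.ofBijective f hbij2) x = f x := fun x => rfl
    obtain ⟨ρ, hρapp⟩ : ∃ ρ : Equiv.Perm (Fin n), ∀ x, ρ x = f x :=
      ⟨Equiv.ofBijective f hbij2, happ2⟩
    refine ⟨ρ, ?_, ?_⟩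
    · -- 213-avoidance
      rintro ⟨i₁, i₂, i₃, h12, h23, hv1, hv2⟩
      rw [Fin.lt_def] at h12 h23 hv1 hv2
      simp only [hρapp] at hv1 hv2
      rw [hfval i₂, hfval i₁] at hv1
      rw [hfval i₁, hfval i₃] at hv2
      have b1 := i₁.isLt
      have b2 := i₂.isLt
      have b3 := i₃.isLt
      have r1 := hRlt (i₁.val - (j₀ + 1)) (by omega)
      have r2 := hRlt (i₂.val - (j₀ + 1)) (by omega)
      have r3 := hRlt (i₃.val - (j₀ + 1)) (by omega)
      split_ifs at hv1 hv2 <;> try omega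
      -- all three indices in the tail block
      refine hρ'av ⟨⟨i₁.val - (j₀ + 1), by omega⟩, ⟨i₂.val - (j₀ + 1), by omega⟩,
        ⟨i₃.val - (j₀ + 1), by omega⟩, Fin.mk_lt_mk.2 (by omega), Fin.mk_lt_mk.2 (by omega),
        ?_, ?_⟩
      · rw [Fin.lt_def]
        have e2 := hRρ ⟨i₂.val - (j₀ + 1), by omega⟩
        have e1 := hRρ ⟨i₁.val - (j₀ + 1), by omega⟩
        rw [← e2, ← e1]
        exact hv1
      · rw [Fin.lt_def]
        have e1 := hRρ ⟨i₁.val - (j₀ + 1), by omega⟩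
        have e3 := hRρ ⟨i₃.val - (j₀ + 1), by omega⟩
        rw [← e1, ← e3]
        exact hv2
    · -- full cycle
      have hcval : ∀ x : Fin n, ((h * ρ) x).val = G ((f x).val) := by
        intro x
        rw [Equiv.Perm.mul_apply, hρapp]
        exact hGh (f x)
      have hF1 : ∀ k (hk : k + 1 < n), k + 1 ≤ j₀ → (h * ρ) ⟨k + 1, hk⟩ = ⟨k, by omega⟩ := by
        intro k hk hkj
        apply Fin.ext
        rw [hcval]
        have hfv : (f ⟨k + 1, hk⟩).val = n - 1 - k := by
          rw [hfval]
          rw [if_neg (by simp), if_pos (by simp; omega)]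
          exact (show n - 1 - (k + 1 - 1) = n - 1 - k by omega)
        rw [hfv]
        exact chain k (by omega)
      have hF2 : (h * ρ) ⟨0, hn⟩ = ⟨qv, hqlt⟩ := by
        apply Fin.ext
        rw [hcval]
        have hfv : (f ⟨0, hn⟩).val = n - (j₀ + 1) := by
          rw [hfval, if_pos rfl]
        rw [hfv]
        rw [(by omega : n - (j₀ + 1) = n - 1 - j₀)]
      have hC'val : ∀ u : Fin (n - (j₀ + 1)), ((h' * ρ') u).val =
          if G (R u.val) = j₀ then qv - (j₀ + 1) else G (R u.val) - (j₀ + 1) := by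
        intro u
        rw [Equiv.Perm.mul_apply, hh'app, hf'val, hRρ]
      have hTail : ∀ (u : Fin (n - (j₀ + 1))) (pu : u.val + (j₀ + 1) < n),
          ((h * ρ) ⟨u.val + (j₀ + 1), pu⟩).val = G (R u.val) := by
        intro u pu
        rw [hcval]
        have hfv : (f ⟨u.val + (j₀ + 1), pu⟩).val = R (u.val + (j₀ + 1) - (j₀ + 1)) := by
          rw [hfval]
          rw [if_neg (by simp), if_neg (by simp; omega)]
        rw [hfv, (by omega : u.val + (j₀ + 1) - (j₀ + 1) = u.val)]
      have St1 : ∀ k, ∀ (hk : k < n), k ≤ j₀ → (h * ρ).SameCycle ⟨k, hk⟩ ⟨0, hn⟩ := by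
        intro k
        induction k with
        | zero => intro hk _; exact Equiv.Perm.SameCycle.refl _ _
        | succ k IHk =>
          intro hk hkj
          have hstep := sc_step' (h * ρ) ⟨k + 1, hk⟩ ⟨k, by omega⟩ (hF1 k hk hkj)
          exact hstep.trans (IHk (by omega) (by omega))
      have St2 : ∀ (u w : Fin (n - (j₀ + 1))) (pu : u.val + (j₀ + 1) < n)
          (pw : w.val + (j₀ + 1) < n), (h' * ρ') u = w →
          (h * ρ).SameCycle ⟨u.val + (j₀ + 1), pu⟩ ⟨w.val + (j₀ + 1), pw⟩ := by
        intro u w pu pw hw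
        have hwv : w.val = ((h' * ρ') u).val := by rw [hw]
        have hC := hC'val u
        have hcu := hTail u pu
        by_cases hj : G (R u.val) = j₀
        · rw [if_pos hj] at hC
          have s1 : (h * ρ).SameCycle ⟨u.val + (j₀ + 1), pu⟩ ⟨j₀, by omega⟩ :=
            sc_step' (h * ρ) ⟨u.val + (j₀ + 1), pu⟩ ⟨j₀, by omega⟩
              (Fin.ext (hcu.trans hj))
          have s2 : (h * ρ).SameCycle ⟨j₀, by omega⟩ ⟨0, hn⟩ := St1 j₀ (by omega) le_rfl
          have s3 : (h * ρ).SameCycle ⟨0, hn⟩ ⟨w.val + (j₀ + 1), pw⟩ :=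
            sc_step' _ _ _ (hF2.trans (Fin.ext (show qv = w.val + (j₀ + 1) by omega)))
          exact (s1.trans s2).trans s3
        · rw [if_neg hj] at hC
          have hge := (C1 (R u.val) (hRlt u.val u.isLt)).1
          exact sc_step' (h * ρ) ⟨u.val + (j₀ + 1), pu⟩ ⟨w.val + (j₀ + 1), pw⟩
            (Fin.ext (hcu.trans (show G (R u.val) = w.val + (j₀ + 1) by omega)))
      have St3 : ∀ (m : ℕ) (u w : Fin (n - (j₀ + 1))) (pu : u.val + (j₀ + 1) < n)
          (pw : w.val + (j₀ + 1) < n), ((h' * ρ') ^ m) u = w →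
          (h * ρ).SameCycle ⟨u.val + (j₀ + 1), pu⟩ ⟨w.val + (j₀ + 1), pw⟩ := by
        intro m
        induction m with
        | zero =>
          intro u w pu pw hw
          simp only [pow_zero, Equiv.Perm.one_apply] at hw
          subst hw
          exact Equiv.Perm.SameCycle.refl _ _
        | succ m IHm =>
          intro u w pu pw hw
          have hv : (h' * ρ') (((h' * ρ') ^ m) u) = w := by
            rw [← Equiv.Perm.mul_apply, ← pow_succ']
            exact hw
          have pv : (((h' * ρ') ^ m) u).val + (j₀ + 1) < n := by
            have := (((h' * ρ') ^ m) u).isLt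
            omega
          exact (IHm u _ pu pv rfl).trans (St2 _ w pv pw hv)
      have St4 : ∀ (u w : Fin (n - (j₀ + 1))) (pu : u.val + (j₀ + 1) < n)
          (pw : w.val + (j₀ + 1) < n),
          (h * ρ).SameCycle ⟨u.val + (j₀ + 1), pu⟩ ⟨w.val + (j₀ + 1), pw⟩ := by
        intro u w pu pw
        obtain ⟨i, -, -, hi⟩ := Equiv.Perm.SameCycle.exists_pow_eq _ (hρ'full u w)
        exact St3 i u w pu pw hi
      have St5 : ∀ x : Fin n, (h * ρ).SameCycle x ⟨0, hn⟩ := by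
        intro x
        by_cases hx : x.val < j₀ + 1
        · have hS := St1 x.val x.isLt (by omega)
          have hxx : (⟨x.val, x.isLt⟩ : Fin n) = x := Fin.ext rfl
          rwa [hxx] at hS
        · have hxb := x.isLt
          have hS := St4 ⟨x.val - (j₀ + 1), by omega⟩ ⟨qv - (j₀ + 1), by omega⟩
            (show x.val - (j₀ + 1) + (j₀ + 1) < n by omega)
            (show qv - (j₀ + 1) + (j₀ + 1) < n by omega)
          have hxx : (⟨(⟨x.val - (j₀ + 1), by omega⟩ : Fin (n - (j₀ + 1))).val + (j₀ + 1),
              show x.val - (j₀ + 1) + (j₀ + 1) < n by omega⟩ : Fin n) = x :=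
            Fin.ext (show x.val - (j₀ + 1) + (j₀ + 1) = x.val by omega)
          have hqq : (⟨(⟨qv - (j₀ + 1), by omega⟩ : Fin (n - (j₀ + 1))).val + (j₀ + 1),
              show qv - (j₀ + 1) + (j₀ + 1) < n by omega⟩ : Fin n) = ⟨qv, hqlt⟩ :=
            Fin.ext (show qv - (j₀ + 1) + (j₀ + 1) = qv by omega)
          rw [hxx, hqq] at hS
          have s3 : (h * ρ).SameCycle ⟨0, hn⟩ ⟨qv, hqlt⟩ := sc_step' _ _ _ hF2
          exact hS.trans s3.symm
      intro x y
      exact (St5 x).trans (St5 y).symm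
  · -- h is the reversal
    push_neg at H
    -- H : ∀ j, j < n-1 → G (n-1-j) = j
    obtain ⟨f, hfdef⟩ : ∃ F : Fin n → Fin n, F = fun x =>
        if x.val = 0 then ⟨0, by omega⟩ else ⟨n - 1 - (x.val - 1), by omega⟩ := ⟨_, rfl⟩
    have hfval : ∀ x : Fin n, (f x).val =
        if x.val = 0 then 0 else n - 1 - (x.val - 1) := by
      intro x
      simp only [hfdef]
      split_ifs <;> rfl
    have hfinj : Function.Injective f := by
      intro a b hab
      have hv : (f a).val = (f b).val := congrArg Fin.val hab
      rw [hfval a, hfval b] at hv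
      have b1 := a.isLt
      have b2 := b.isLt
      apply Fin.ext
      split_ifs at hv <;> omega
    have hbij2 : Function.Bijective f := Finite.injective_iff_bijective.mp hfinj
    have happ2 : ∀ x, (Equiv.ofBijective f hbij2) x = f x := fun x => rfl
    obtain ⟨ρ, hρapp⟩ : ∃ ρ : Equiv.Perm (Fin n), ∀ x, ρ x = f x :=
      ⟨Equiv.ofBijective f hbij2, happ2⟩
    have hcval : ∀ x : Fin n, ((h * ρ) x).val = G ((f x).val) := by
      intro x
      rw [Equiv.Perm.mul_apply, hρapp]
      exact hGh (f x)
    have ccomp : ∀ k (hk : k + 1 < n), (h * ρ) ⟨k + 1, hk⟩ = ⟨k, by omega⟩ := by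
      intro k hk
      apply Fin.ext
      rw [hcval]
      have hfv : (f ⟨k + 1, hk⟩).val = n - 1 - k := by
        rw [hfval, if_neg (by simp)]
        exact (show n - 1 - (k + 1 - 1) = n - 1 - k by omega)
      rw [hfv]
      exact H k (by omega)
    refine ⟨ρ, ?_, ?_⟩
    · rintro ⟨i₁, i₂, i₃, h12, h23, hv1, hv2⟩
      rw [Fin.lt_def] at h12 h23 hv1 hv2
      simp only [hρapp] at hv1 hv2
      rw [hfval i₂, hfval i₁] at hv1
      rw [hfval i₁, hfval i₃] at hv2
      have b1 := i₁.isLt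
      have b2 := i₂.isLt
      have b3 := i₃.isLt
      split_ifs at hv1 hv2 <;> omega
    · have St1 : ∀ k, ∀ (hk : k < n), (h * ρ).SameCycle ⟨k, hk⟩ ⟨0, hn⟩ := by
        intro k
        induction k with
        | zero => intro hk; exact Equiv.Perm.SameCycle.refl _ _
        | succ k IHk =>
          intro hk
          have hstep := sc_step' (h * ρ) ⟨k + 1, hk⟩ ⟨k, by omega⟩ (ccomp k hk)
          exact hstep.trans (IHk (by omega))
      intro x y
      have hx := St1 x.val x.isLt
      have hy := St1 y.val y.isLt
      rw [Fin.eta] at hx hy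
      exact hx.trans hy.symm

theorem stmt_7 (m : ℕ) (π₁ π₂ : Equiv.Perm (Fin m)) :
    ∃ ρ₁ ρ₂ α β : Equiv.Perm (Fin m), ¬ Contains213 ρ₁ ∧ ¬ Contains132 ρ₂ ∧
      α * ρ₁ * β = π₁ ∧ α⁻¹ * ρ₂ * β⁻¹ = π₂ := by
  rcases lt_or_ge m 2 with hm | hm
  · have hsub : Subsingleton (Fin m) := by
      interval_cases m
      · exact ⟨fun a => a.elim0⟩
      · infer_instance
    have : Subsingleton (Equiv.Perm (Fin m)) := inferInstance
    exact ⟨1, 1, 1, 1, not213_one, not132_one, Subsingleton.elim _ _, Subsingleton.elim _ _⟩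
  · obtain ⟨ρ₁, hρ₁, hc₁⟩ := key m π₂⁻¹
    obtain ⟨ρ, hρ, hcX⟩ := key m (Fin.revPerm * π₁⁻¹ * Fin.revPerm)
    set r : Equiv.Perm (Fin m) := Fin.revPerm with hr
    have hrinv : r⁻¹ = r := by
      rw [hr, Equiv.Perm.inv_def, Fin.revPerm_symm]
    set ρ₂ : Equiv.Perm (Fin m) := r * ρ * r with hρ₂def
    have hρ₂ : ¬ Contains132 ρ₂ := rev_avoid hρ
    have hc₂ : IsFull (ρ₂⁻¹ * π₁) := by
      have h2 := isFull_conj r (isFull_inv hcX)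
      have heq : r * (r * π₁⁻¹ * r * ρ)⁻¹ * r⁻¹ = ρ₂⁻¹ * π₁ := by
        rw [hρ₂def]
        simp only [mul_inv_rev, inv_inv, hrinv]
        ext x
        simp [Equiv.Perm.mul_apply, hr, Fin.rev_rev]
      rw [heq] at h2
      exact h2
    obtain ⟨hcyc₁, hcard₁⟩ := isFull_isCycle hm hc₁
    obtain ⟨hcyc₂, hcard₂⟩ := isFull_isCycle hm hc₂
    have hconj : IsConj (π₂⁻¹ * ρ₁) (ρ₂⁻¹ * π₁) :=
      hcyc₁.isConj hcyc₂ (by rw [hcard₁, hcard₂])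
    obtain ⟨γ, hγ⟩ := isConj_iff.1 hconj
    refine ⟨ρ₁, ρ₂, ρ₂ * γ * π₂⁻¹, γ⁻¹, hρ₁, hρ₂, ?_, ?_⟩
    · calc ρ₂ * γ * π₂⁻¹ * ρ₁ * γ⁻¹
          = ρ₂ * (γ * (π₂⁻¹ * ρ₁) * γ⁻¹) := by group
        _ = ρ₂ * (ρ₂⁻¹ * π₁) := by rw [hγ]
        _ = π₁ := by group
    · group
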